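/- In the ideal asymmetric core-periphery network, every triad on three distinct vertices is of one of the following types: 003 (all three peripheral), 021U (two peripheral vertices each sending an arc to one core vertex, the peripheral pair being null), 120D (a mutual core dyad with the peripheral third vertex sending an arc to each of its members), or 300 (three core vertices, all dyads mutual); and if a ≥ 3 and b ≥ 3, all four types occur. -/

import Mathlib

variable {V : Type*}

/-- Dyad `{i, j}` is mutual: both arcs present. -/
def Mutual (A : V → V → Prop) (i j : V) : Prop := A i j ∧ A j i

/-- Dyad `{i, j}` is null: no arc present. -/
def NullDyad (A : V → V → Prop) (i j : V) : Prop := ¬ A i j ∧ ¬ A j i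

/-- Dyad `{i, j}` is asymmetric: exactly one of the two arcs is present. -/
def AsymDyad (A : V → V → Prop) (i j : V) : Prop :=
  (A i j ∧ ¬ A j i) ∨ (¬ A i j ∧ A j i)

/-- Triad type 003: all three dyads null. -/
def Triad003 (A : V → V → Prop) (i j k : V) : Prop :=
  NullDyad A i j ∧ NullDyad A j k ∧ NullDyad A i k

/-- Triad type 300: all three dyads mutual. -/
def Triad300 (A : V → V → Prop) (i j k : V) : Prop :=
  Mutual A i j ∧ Mutual A j k ∧ Mutual A i k

/-- Triad type 102: one mutual dyad, both remaining dyads null. -/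
def Triad102 (A : V → V → Prop) (i j k : V) : Prop :=
  (Mutual A i j ∧ NullDyad A j k ∧ NullDyad A i k) ∨
  (Mutual A j k ∧ NullDyad A i j ∧ NullDyad A i k) ∨
  (Mutual A i k ∧ NullDyad A i j ∧ NullDyad A j k)

/-- Triad type 201: two mutual dyads, the remaining dyad null. -/
def Triad201 (A : V → V → Prop) (i j k : V) : Prop :=
  (Mutual A i j ∧ Mutual A j k ∧ NullDyad A i k) ∨
  (Mutual A i j ∧ Mutual A i k ∧ NullDyad A j k) ∨
  (Mutual A j k ∧ Mutual A i k ∧ NullDyad A i j)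

/-- Triad type 012: exactly one asymmetric dyad, both remaining dyads null. -/
def Triad012 (A : V → V → Prop) (i j k : V) : Prop :=
  (AsymDyad A i j ∧ NullDyad A j k ∧ NullDyad A i k) ∨
  (AsymDyad A j k ∧ NullDyad A i j ∧ NullDyad A i k) ∨
  (AsymDyad A i k ∧ NullDyad A i j ∧ NullDyad A j k)

/-- Two asymmetric arcs `x → z` and `y → z` with common head `z`, dyad `{x, y}` null. -/
def Head021U (A : V → V → Prop) (x y z : V) : Prop :=
  A x z ∧ A y z ∧ ¬ A z x ∧ ¬ A z y ∧ NullDyad A x y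

/-- Triad type 021U: two asymmetric arcs with a common head, remaining dyad null. -/
def Triad021U (A : V → V → Prop) (i j k : V) : Prop :=
  Head021U A i j k ∨ Head021U A i k j ∨ Head021U A j k i

/-- Two asymmetric arcs `z → x` and `z → y` with common tail `z`, dyad `{x, y}` null. -/
def Tail021D (A : V → V → Prop) (x y z : V) : Prop :=
  A z x ∧ A z y ∧ ¬ A x z ∧ ¬ A y z ∧ NullDyad A x y

/-- Triad type 021D: two asymmetric arcs with a common tail, remaining dyad null. -/
def Triad021D (A : V → V → Prop) (i j k : V) : Prop :=
  Tail021D A i j k ∨ Tail021D A i k j ∨ Tail021D A j k i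

/-- A directed path `x → y → z` with all other arcs among the three vertices absent. -/
def Path021C (A : V → V → Prop) (x y z : V) : Prop :=
  A x y ∧ A y z ∧ ¬ A y x ∧ ¬ A z y ∧ NullDyad A x z

/-- Triad type 021C. -/
def Triad021C (A : V → V → Prop) (i j k : V) : Prop :=
  Path021C A i j k ∨ Path021C A i k j ∨ Path021C A j i k ∨
  Path021C A j k i ∨ Path021C A k i j ∨ Path021C A k j i

/-- Mutual dyad `{x, y}` plus asymmetric arcs from each of `x`, `y` to the third vertex `z`. -/
def Up120 (A : V → V → Prop) (x y z : V) : Prop :=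
  Mutual A x y ∧ A x z ∧ A y z ∧ ¬ A z x ∧ ¬ A z y

/-- Triad type 120U. -/
def Triad120U (A : V → V → Prop) (i j k : V) : Prop :=
  Up120 A i j k ∨ Up120 A i k j ∨ Up120 A j k i

/-- Mutual dyad `{x, y}` plus asymmetric arcs from the third vertex `z` to each of `x`, `y`. -/
def Down120 (A : V → V → Prop) (x y z : V) : Prop :=
  Mutual A x y ∧ A z x ∧ A z y ∧ ¬ A x z ∧ ¬ A y z

/-- Triad type 120D. -/
def Triad120D (A : V → V → Prop) (i j k : V) : Prop :=
  Down120 A i j k ∨ Down120 A i k j ∨ Down120 A j k i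

/-- Transitive triple: arcs `x → y`, `y → z`, `x → z`, with no reverse arcs. -/
def Trans030 (A : V → V → Prop) (x y z : V) : Prop :=
  A x y ∧ A y z ∧ A x z ∧ ¬ A y x ∧ ¬ A z y ∧ ¬ A z x

/-- Triad type 030T. -/
def Triad030T (A : V → V → Prop) (i j k : V) : Prop :=
  Trans030 A i j k ∨ Trans030 A i k j ∨ Trans030 A j i k ∨
  Trans030 A j k i ∨ Trans030 A k i j ∨ Trans030 A k j i

/-- Cyclic triple: arcs `x → y`, `y → z`, `z → x`, with no reverse arcs. -/
def Cycle030 (A : V → V → Prop) (x y z : V) : Prop :=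
  A x y ∧ A y z ∧ A z x ∧ ¬ A y x ∧ ¬ A z y ∧ ¬ A x z

/-- Triad type 030C. -/
def Triad030C (A : V → V → Prop) (i j k : V) : Prop :=
  Cycle030 A i j k ∨ Cycle030 A i k j

/-- The 3-element subset `s` induces the triad type `T`. -/
def InducesTriad [DecidableEq V] (T : V → V → V → Prop) (s : Finset V) : Prop :=
  ∃ i j k : V, i ≠ j ∧ i ≠ k ∧ j ≠ k ∧ s = {i, j, k} ∧ T i j k

/-- The ideal asymmetric core-periphery network (`c v = true` means `v` is a core vertex):
an arc from `i` to `j` iff `i ≠ j` and `j` is in the core. -/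
def AsymCPAdj (c : V → Bool) (i j : V) : Prop := i ≠ j ∧ c j = true

/-- In the ideal asymmetric core-periphery network every triad is of type 003, 021U, 120D
or 300, and if the core and the periphery each have at least 3 vertices then all four
types occur. -/
lemma three_distinct' {V : Type*} [DecidableEq V] {s : Finset V} (h : 3 ≤ s.card) :
    ∃ x y z, x ∈ s ∧ y ∈ s ∧ z ∈ s ∧ x ≠ y ∧ x ≠ z ∧ y ≠ z := by
  obtain ⟨t, hts, hcard⟩ := Finset.exists_subset_card_eq (s := s) (n := 3) h
  obtain ⟨x, y, z, hxy, hxz, hyz, rfl⟩ := Finset.card_eq_three.mp hcard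
  exact ⟨x, y, z, hts (by simp), hts (by simp), hts (by simp), hxy, hxz, hyz⟩

theorem asymCP_triads {V : Type*} [Fintype V] [DecidableEq V]
    (c : V → Bool) (a b : ℕ)
    (ha : a = (Finset.univ.filter fun v => c v = true).card)
    (hb : b = (Finset.univ.filter fun v => c v = false).card) :
    (∀ i j k : V, i ≠ j → i ≠ k → j ≠ k →
        Triad003 (AsymCPAdj c) i j k ∨ Triad021U (AsymCPAdj c) i j k ∨
          Triad120D (AsymCPAdj c) i j k ∨ Triad300 (AsymCPAdj c) i j k) ∧
    (3 ≤ a → 3 ≤ b →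
        (∃ i j k : V, i ≠ j ∧ i ≠ k ∧ j ≠ k ∧ Triad003 (AsymCPAdj c) i j k) ∧
        (∃ i j k : V, i ≠ j ∧ i ≠ k ∧ j ≠ k ∧ Triad021U (AsymCPAdj c) i j k) ∧
        (∃ i j k : V, i ≠ j ∧ i ≠ k ∧ j ≠ k ∧ Triad120D (AsymCPAdj c) i j k) ∧
        (∃ i j k : V, i ≠ j ∧ i ≠ k ∧ j ≠ k ∧ Triad300 (AsymCPAdj c) i j k)) := by
  have classify : ∀ i j k : V, i ≠ j → i ≠ k → j ≠ k →
      Triad003 (AsymCPAdj c) i j k ∨ Triad021U (AsymCPAdj c) i j k ∨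
        Triad120D (AsymCPAdj c) i j k ∨ Triad300 (AsymCPAdj c) i j k := by
    intro i j k hij hik hjk
    unfold Triad003 Triad021U Triad120D Triad300 Head021U Down120 Mutual NullDyad AsymCPAdj
    cases hci : c i <;> cases hcj : c j <;> cases hck : c k <;>
      simp [hci, hcj, hck, hij, hik, hjk, hij.symm, hik.symm, hjk.symm]
  refine ⟨classify, fun ha3 hb3 => ?_⟩
  obtain ⟨x, y, z, hx, hy, hz, hxy, hxz, hyz⟩ := three_distinct' (ha ▸ ha3)
  obtain ⟨p, q, r, hp, hq, hr, hpq, hpr, hqr⟩ := three_distinct' (hb ▸ hb3)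
  simp only [Finset.mem_filter, Finset.mem_univ, true_and] at hx hy hz hp hq hr
  refine ⟨⟨p, q, r, hpq, hpr, hqr, ?_⟩, ⟨p, q, x, ?_, ?_, ?_, ?_⟩,
    ⟨x, y, p, ?_, ?_, ?_, ?_⟩, ⟨x, y, z, hxy, hxz, hyz, ?_⟩⟩
  · unfold Triad003 NullDyad AsymCPAdj; simp [hp, hq, hr]
  · exact hpq
  · rintro rfl; rw [hx] at hp; exact Bool.noConfusion hp
  · rintro rfl; rw [hx] at hq; exact Bool.noConfusion hq
  · refine Or.inl ?_
    unfold Head021U NullDyad AsymCPAdj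
    have h1 : p ≠ x := by rintro rfl; rw [hx] at hp; exact Bool.noConfusion hp
    have h2 : q ≠ x := by rintro rfl; rw [hx] at hq; exact Bool.noConfusion hq
    simp [hx, hp, hq, h1, h2, hpq]
  · exact hxy
  · rintro rfl; rw [hx] at hp; exact Bool.noConfusion hp
  · rintro rfl; rw [hy] at hp; exact Bool.noConfusion hp
  · refine Or.inl ?_
    have h1 : p ≠ x := by rintro rfl; rw [hx] at hp; exact Bool.noConfusion hp
    have h2 : p ≠ y := by rintro rfl; rw [hy] at hp; exact Bool.noConfusion hp
    unfold Down120 Mutual AsymCPAdj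
    simp [hx, hy, hp, h1, h2, hxy, hxy.symm]
  · unfold Triad300 Mutual AsymCPAdj
    simp [hx, hy, hz, hxy, hxz, hyz, hxy.symm, hxz.symm, hyz.symm]
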